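/- arXiv:2011.01521 — 2 statements merged into one kernel-verified Lean document; each statement's English description precedes it below -/
import Mathlib

section
/- Let p, q > 1 and set r = (p+q-2)/p. There exists a constant C(p,q) > 0 such that for all real numbers a > b > 0: (a-b)^{p-1}·(a^{q-1} - b^{q-1}) ≥ C(p,q)·|a^r - b^r|^p. -/
open Real Set

lemma rpow_mvt (s : ℝ) {a b : ℝ} (hb : 0 < b) (hab : b < a) :
    ∃ c, b < c ∧ c < a ∧ a ^ s - b ^ s = s * c ^ (s - 1) * (a - b) := by
  obtain ⟨c, hc, hderiv⟩ := exists_hasDerivAt_eq_slope (fun x => x ^ s)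
    (fun x => s * x ^ (s - 1)) hab
    (fun x hx => (Real.continuousAt_rpow_const x s
      (Or.inl (ne_of_gt (lt_of_lt_of_le hb hx.1)))).continuousWithinAt)
    (fun x hx => Real.hasDerivAt_rpow_const (Or.inl (ne_of_gt (hb.trans hx.1))))
  refine ⟨c, hc.1, hc.2, ?_⟩
  have hba : a - b ≠ 0 := sub_ne_zero.mpr (ne_of_gt hab)
  field_simp at hderiv
  linarith [hderiv]

/-- For `p, q > 1` and `r = (p+q-2)/p`, there exists `C(p,q) > 0` such that
for all `a > b > 0`: `(a-b)^{p-1}(a^{q-1} - b^{q-1}) ≥ C |a^r - b^r|^p`. -/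
theorem numerical_inequality (p q : ℝ) (hp : 1 < p) (hq : 1 < q) :
    ∃ C : ℝ, 0 < C ∧ ∀ a b : ℝ, 0 < b → b < a →
      (a - b) ^ (p - 1) * (a ^ (q - 1) - b ^ (q - 1)) ≥
        C * |a ^ ((p + q - 2) / p) - b ^ ((p + q - 2) / p)| ^ p := by
  set r : ℝ := (p + q - 2) / p with hr_def
  have hp0 : (0:ℝ) < p := by linarith
  have hr0 : 0 < r := div_pos (by linarith) hp0
  have hrp : r * p = p + q - 2 := by rw [hr_def]; field_simp
  have hr1p : (r - 1) * p = q - 2 := by rw [hr_def]; field_simp; ring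
  have h2q : (2:ℝ) ^ (1 - q) < 1 :=
    Real.rpow_lt_one_of_one_lt_of_neg (by norm_num) (by linarith)
  set C1 : ℝ := 2 ^ (1 - p) * (1 - 2 ^ (1 - q)) with hC1
  set C2 : ℝ := (q - 1) * 2 ^ (-|q - 2|) / r ^ p with hC2
  have hC1pos : 0 < C1 := mul_pos (Real.rpow_pos_of_pos (by norm_num) _) (by linarith)
  have hrppos : (0:ℝ) < r ^ p := Real.rpow_pos_of_pos hr0 _
  have hC2pos : 0 < C2 :=
    div_pos (mul_pos (by linarith) (Real.rpow_pos_of_pos (by norm_num) _)) hrppos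
  refine ⟨min C1 C2, lt_min hC1pos hC2pos, fun a b hb hab => ?_⟩
  have ha : 0 < a := hb.trans hab
  have hab' : 0 < a - b := sub_pos.mpr hab
  have hrab : b ^ r < a ^ r := Real.rpow_lt_rpow hb.le hab hr0
  have hbr : (0:ℝ) < b ^ r := Real.rpow_pos_of_pos hb _
  rw [abs_of_pos (sub_pos.mpr hrab)]
  rcases le_or_gt b (a / 2) with hcase | hcase
  · -- b ≤ a/2
    have hRHS : (a ^ r - b ^ r) ^ p ≤ a ^ (p + q - 2) := by
      calc (a ^ r - b ^ r) ^ p ≤ (a ^ r) ^ p :=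
            Real.rpow_le_rpow (by linarith) (by linarith) hp0.le
        _ = a ^ (p + q - 2) := by rw [← Real.rpow_mul ha.le, hrp]
    have h1 : (a / 2) ^ (p - 1) ≤ (a - b) ^ (p - 1) :=
      Real.rpow_le_rpow (by positivity) (by linarith) (by linarith)
    have h2 : a ^ (q - 1) - (a / 2) ^ (q - 1) ≤ a ^ (q - 1) - b ^ (q - 1) := by
      have := Real.rpow_le_rpow hb.le hcase (by linarith : (0:ℝ) ≤ q - 1)
      linarith
    have hdiv1 : (a / 2) ^ (p - 1) = a ^ (p - 1) * 2 ^ (-(p - 1)) := by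
      rw [Real.div_rpow ha.le (by norm_num), Real.rpow_neg (by norm_num)]
      ring
    have hdiv2 : (a / 2) ^ (q - 1) = a ^ (q - 1) * 2 ^ (-(q - 1)) := by
      rw [Real.div_rpow ha.le (by norm_num), Real.rpow_neg (by norm_num)]
      ring
    have hLHS : C1 * a ^ (p + q - 2) ≤ (a - b) ^ (p - 1) * (a ^ (q - 1) - b ^ (q - 1)) := by
      have key : (a / 2) ^ (p - 1) * (a ^ (q - 1) - (a / 2) ^ (q - 1))
          = C1 * a ^ (p + q - 2) := by
        rw [hdiv1, hdiv2, hC1]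
        have e1 : a ^ (p - 1) * a ^ (q - 1) = a ^ (p + q - 2) := by
          rw [← Real.rpow_add ha]; ring_nf
        have e2 : (2:ℝ) ^ (-(p - 1)) = 2 ^ (1 - p) := by ring_nf
        have e3 : (2:ℝ) ^ (-(q - 1)) = 2 ^ (1 - q) := by ring_nf
        rw [e2, e3]
        nlinarith [e1]
      rw [← key]
      have hnn : (0:ℝ) ≤ a ^ (q - 1) - (a / 2) ^ (q - 1) := by
        rw [hdiv2]
        nlinarith [Real.rpow_pos_of_pos ha (q-1), show (2:ℝ) ^ (-(q-1)) < 1 from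
          Real.rpow_lt_one_of_one_lt_of_neg (by norm_num) (by linarith)]
      exact mul_le_mul h1 h2 hnn (Real.rpow_pos_of_pos hab' _).le
    calc min C1 C2 * (a ^ r - b ^ r) ^ p ≤ C1 * a ^ (p + q - 2) := by
          apply mul_le_mul (min_le_left _ _) hRHS (Real.rpow_nonneg (by linarith) p) hC1pos.le
      _ ≤ _ := hLHS
  · -- a/2 < b
    obtain ⟨c, hbc, hca, hc⟩ := rpow_mvt r hb hab
    obtain ⟨d, hbd, hda, hd⟩ := rpow_mvt (q - 1) hb hab
    have hc0 : 0 < c := hb.trans hbc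
    have hd0 : 0 < d := hb.trans hbd
    have hd' : a ^ (q - 1) - b ^ (q - 1) = (q - 1) * d ^ (q - 2) * (a - b) := by
      rw [hd, show q - 1 - 1 = q - 2 by ring]
    have hcd2 : d < 2 * c := by linarith
    have hkey : 2 ^ (-|q - 2|) * c ^ (q - 2) ≤ d ^ (q - 2) := by
      rcases le_or_gt 2 q with hq2 | hq2
      · rw [abs_of_nonneg (by linarith : (0:ℝ) ≤ q - 2)]
        have h1 : (c / 2) ^ (q - 2) ≤ d ^ (q - 2) :=
          Real.rpow_le_rpow (by positivity) (by linarith) (by linarith)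
        have h2 : (c / 2) ^ (q - 2) = 2 ^ (-(q - 2)) * c ^ (q - 2) := by
          rw [Real.div_rpow hc0.le (by norm_num), Real.rpow_neg (by norm_num)]
          ring
        linarith [h2 ▸ h1]
      · rw [abs_of_neg (by linarith : q - 2 < 0), neg_neg]
        have h1 : (2 * c) ^ (q - 2) ≤ d ^ (q - 2) :=
          Real.rpow_le_rpow_of_nonpos hd0 hcd2.le (by linarith)
        rwa [Real.mul_rpow (by norm_num) hc0.le] at h1
    have hcp : (a ^ r - b ^ r) ^ p = r ^ p * c ^ (q - 2) * (a - b) ^ p := by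
      rw [hc, Real.mul_rpow (by positivity) hab'.le,
        Real.mul_rpow hr0.le (by positivity), ← Real.rpow_mul hc0.le, hr1p]
    have habp : (a - b) ^ (p - 1) * (a - b) = (a - b) ^ p := by
      rw [← Real.rpow_add_one (ne_of_gt hab') (p - 1)]
      norm_num
    have hC2e : C2 * r ^ p = (q - 1) * 2 ^ (-|q - 2|) := by
      rw [hC2, div_mul_cancel₀ _ (ne_of_gt hrppos)]
    have hC2r : min C1 C2 * r ^ p ≤ (q - 1) * 2 ^ (-|q - 2|) := by
      rw [← hC2e]
      exact mul_le_mul_of_nonneg_right (min_le_right _ _) hrppos.le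
    rw [hcp, hd']
    have habp1 : (0:ℝ) < (a - b) ^ (p - 1) := Real.rpow_pos_of_pos hab' _
    have hcq : (0:ℝ) < c ^ (q - 2) := Real.rpow_pos_of_pos hc0 _
    calc min C1 C2 * (r ^ p * c ^ (q - 2) * (a - b) ^ p)
        = (min C1 C2 * r ^ p) * c ^ (q - 2) * ((a - b) ^ (p-1) * (a - b)) := by
          rw [habp]; ring
      _ ≤ ((q - 1) * 2 ^ (-|q - 2|)) * c ^ (q - 2) * ((a - b) ^ (p-1) * (a - b)) := by
          apply mul_le_mul_of_nonneg_right (mul_le_mul_of_nonneg_right hC2r hcq.le)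
          exact mul_nonneg habp1.le hab'.le
      _ = (a - b) ^ (p-1) * ((q - 1) * (2 ^ (-|q - 2|) * c ^ (q - 2)) * (a - b)) := by ring
      _ ≤ (a - b) ^ (p-1) * ((q - 1) * d ^ (q - 2) * (a - b)) := by
          apply mul_le_mul_of_nonneg_left _ habp1.le
          exact mul_le_mul_of_nonneg_right
            (mul_le_mul_of_nonneg_left hkey (by linarith)) hab'.le
end

section
/- Let p, q > 1 and r = (p+q-2)/p. There exists C(p,q) > 0 such that for all a, b₁ > 0: (a+b₁)^{p-1}·(a^{q-1} + b₁^{q-1}) ≥ C(p,q)·(a^r + b₁^r)^p. -/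
/-- For `p, q > 1` and `r = (p+q-2)/p`, there exists `C(p,q) > 0` such that
for all `a, b₁ > 0`: `(a+b₁)^{p-1}(a^{q-1} + b₁^{q-1}) ≥ C (a^r + b₁^r)^p`. -/
theorem numerical_inequality_signed (p q : ℝ) (hp : 1 < p) (hq : 1 < q) :
    ∃ C : ℝ, 0 < C ∧ ∀ a b₁ : ℝ, 0 < a → 0 < b₁ →
      (a + b₁) ^ (p - 1) * (a ^ (q - 1) + b₁ ^ (q - 1)) ≥
        C * (a ^ ((p + q - 2) / p) + b₁ ^ ((p + q - 2) / p)) ^ p := by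
  refine ⟨(2 : ℝ) ^ (-p), Real.rpow_pos_of_pos two_pos _, ?_⟩
  intro a b₁ ha hb
  set r := (p + q - 2) / p with hr
  set m := max a b₁ with hm
  have hm0 : 0 < m := lt_max_of_lt_left ha
  have hp0 : (0 : ℝ) < p := by linarith
  have hr0 : 0 ≤ r := div_nonneg (by linarith) hp0.le
  have h1 : a ^ r ≤ m ^ r := Real.rpow_le_rpow ha.le (le_max_left _ _) hr0
  have h2 : b₁ ^ r ≤ m ^ r := Real.rpow_le_rpow hb.le (le_max_right _ _) hr0
  have hR : (a ^ r + b₁ ^ r) ^ p ≤ 2 ^ p * m ^ (p + q - 2) := by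
    calc (a ^ r + b₁ ^ r) ^ p ≤ (2 * m ^ r) ^ p :=
          Real.rpow_le_rpow (by positivity) (by linarith) hp0.le
      _ = 2 ^ p * (m ^ r) ^ p := Real.mul_rpow (by norm_num) (by positivity)
      _ = 2 ^ p * m ^ (p + q - 2) := by
          rw [← Real.rpow_mul hm0.le, hr, div_mul_cancel₀ _ hp0.ne']
  have hL1 : m ^ (p - 1) ≤ (a + b₁) ^ (p - 1) := by
    apply Real.rpow_le_rpow hm0.le _ (by linarith)
    rcases max_cases a b₁ with ⟨h, _⟩ | ⟨h, _⟩ <;> rw [hm, h] <;> linarith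
  have hL2 : m ^ (q - 1) ≤ a ^ (q - 1) + b₁ ^ (q - 1) := by
    rcases max_cases a b₁ with ⟨h, _⟩ | ⟨h, _⟩ <;> rw [hm, h]
    · nlinarith [Real.rpow_pos_of_pos hb (q - 1)]
    · nlinarith [Real.rpow_pos_of_pos ha (q - 1)]
  have hL : m ^ (p + q - 2) ≤ (a + b₁) ^ (p - 1) * (a ^ (q - 1) + b₁ ^ (q - 1)) := by
    have : m ^ (p + q - 2) = m ^ (p - 1) * m ^ (q - 1) := by
      rw [← Real.rpow_add hm0]; ring_nf
    rw [this]
    exact mul_le_mul hL1 hL2 (by positivity) (by positivity)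
  have key : (2 : ℝ) ^ (-p) * (a ^ r + b₁ ^ r) ^ p ≤ m ^ (p + q - 2) := by
    have h2p : (0 : ℝ) < (2 : ℝ) ^ (-p) := Real.rpow_pos_of_pos two_pos _
    have := mul_le_mul_of_nonneg_left hR h2p.le
    calc (2 : ℝ) ^ (-p) * (a ^ r + b₁ ^ r) ^ p
        ≤ (2 : ℝ) ^ (-p) * (2 ^ p * m ^ (p + q - 2)) := this
      _ = m ^ (p + q - 2) := by
          rw [← mul_assoc, ← Real.rpow_add two_pos]; simp
  exact le_trans key hL
end
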